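/- Let n ≥ 1 and let p_1, …, p_n ∈ [0,1). For a nonempty subset s ⊆ {1,…,n} write p_s = ∏_{i∈s} p_i. Then ∑_{k=1}^∞ (1 − ∏_{i=1}^n (1 − p_i^k)) = ∑_{∅ ≠ s ⊆ {1,…,n}} (−1)^{|s|−1} (1/(1 − p_s) − 1), where all sums converge absolutely. -/

import Mathlib

private lemma prod_neg_aux {α : Type*} (s : Finset α) (f : α → ℝ) :
    ∏ i ∈ s, -(f i) = (-1)^s.card * ∏ i ∈ s, f i := by
  calc ∏ i ∈ s, -(f i) = ∏ i ∈ s, ((-1) * f i) := by simp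
    _ = (∏ i ∈ s, (-1:ℝ)) * ∏ i ∈ s, f i := Finset.prod_mul_distrib
    _ = _ := by rw [Finset.prod_const]

/-- For `n ≥ 1` and `p_1, …, p_n ∈ [0,1)`, writing `p_s = ∏_{i ∈ s} p_i` for
nonempty `s ⊆ {1,…,n}`, we have
`∑_{k=1}^∞ (1 − ∏_i (1 − p_i^k)) = ∑_{∅ ≠ s} (−1)^{|s|−1} (1/(1−p_s) − 1)`,
where the infinite sum converges absolutely. -/
theorem batch_learner_inclusion_exclusion
    (n : ℕ) (hn : 1 ≤ n) (p : Fin n → ℝ) (hp : ∀ i, p i ∈ Set.Ico (0 : ℝ) 1) :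
    Summable (fun k : ℕ => |1 - ∏ i, (1 - p i ^ (k + 1))|) ∧
    (∑' k : ℕ, (1 - ∏ i, (1 - p i ^ (k + 1)))) =
      ∑ s ∈ Finset.univ.powerset.filter (fun s : Finset (Fin n) => s.Nonempty),
        (-1 : ℝ) ^ (s.card - 1) * (1 / (1 - ∏ i ∈ s, p i) - 1) := by
  set S := Finset.univ.powerset.filter (fun s : Finset (Fin n) => s.Nonempty) with hS
  have hps : ∀ s ∈ S, (0 ≤ ∏ i ∈ s, p i) ∧ (∏ i ∈ s, p i) < 1 := by
    intro s hs
    simp only [hS, Finset.mem_filter] at hs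
    obtain ⟨-, ⟨i, hi⟩⟩ := hs
    refine ⟨Finset.prod_nonneg fun j _ => (hp j).1, ?_⟩
    calc ∏ j ∈ s, p j = p i * ∏ j ∈ s.erase i, p j := (Finset.mul_prod_erase s p hi).symm
      _ ≤ p i * 1 := mul_le_mul_of_nonneg_left
          (Finset.prod_le_one (fun j _ => (hp j).1) (fun j _ => (hp j).2.le)) (hp i).1
      _ < 1 := by simpa using (hp i).2
  have hcard : ∀ s ∈ S, 1 ≤ s.card := by
    intro s hs
    simp only [hS, Finset.mem_filter] at hs
    exact Finset.Nonempty.card_pos hs.2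
  -- pointwise inclusion-exclusion
  have key : ∀ k : ℕ, (1 - ∏ i, (1 - p i ^ (k + 1))) =
      ∑ s ∈ S, (-1 : ℝ) ^ (s.card - 1) * (∏ i ∈ s, p i) ^ (k + 1) := by
    intro k
    have hexp : (∏ i, (1 - p i ^ (k + 1))) =
        ∑ t ∈ (Finset.univ : Finset (Fin n)).powerset,
          (-1 : ℝ) ^ t.card * (∏ i ∈ t, p i) ^ (k + 1) := by
      have h := Finset.prod_add (fun i : Fin n => -(p i ^ (k + 1))) (fun _ : Fin n => (1 : ℝ))
        Finset.univ
      simp only [Finset.prod_const_one, mul_one] at h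
      calc (∏ i, (1 - p i ^ (k + 1))) = ∏ i, (-(p i ^ (k + 1)) + 1) := by
            refine Finset.prod_congr rfl fun i _ => by ring
        _ = ∑ t ∈ (Finset.univ : Finset (Fin n)).powerset, ∏ i ∈ t, -(p i ^ (k + 1)) := h
        _ = _ := by
            refine Finset.sum_congr rfl fun t _ => ?_
            rw [prod_neg_aux, Finset.prod_pow]
    have hsplit : ∑ t ∈ (Finset.univ : Finset (Fin n)).powerset,
        (-1 : ℝ) ^ t.card * (∏ i ∈ t, p i) ^ (k + 1) =
        (∑ s ∈ S, (-1 : ℝ) ^ s.card * (∏ i ∈ s, p i) ^ (k + 1)) + 1 := by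
      rw [← Finset.sum_filter_add_sum_filter_not (Finset.univ : Finset (Fin n)).powerset
        (fun s => s.Nonempty)]
      congr 1
      have : (Finset.univ : Finset (Fin n)).powerset.filter (fun s => ¬ s.Nonempty) =
          {(∅ : Finset (Fin n))} := by
        ext t
        simp [Finset.not_nonempty_iff_eq_empty]
      rw [this]
      simp
    have hterm : ∀ s ∈ S, (-1 : ℝ) ^ (s.card - 1) * (∏ i ∈ s, p i) ^ (k + 1) =
        -((-1) ^ s.card * (∏ i ∈ s, p i) ^ (k + 1)) := by
      intro s hs
      set m := s.card - 1 with hm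
      have h1 : s.card = m + 1 := (Nat.succ_pred_eq_of_pos (hcard s hs)).symm
      rw [h1, pow_succ]; ring
    rw [hexp, hsplit, Finset.sum_congr rfl hterm, Finset.sum_neg_distrib]
    ring
  -- summability of each geometric term
  have hgeom : ∀ s ∈ S, Summable (fun k : ℕ =>
      (-1 : ℝ) ^ (s.card - 1) * (∏ i ∈ s, p i) ^ (k + 1)) := by
    intro s hs
    have h := (summable_geometric_of_lt_one (hps s hs).1 (hps s hs).2).mul_right (∏ i ∈ s, p i)
    have h2 : (fun k : ℕ => (∏ i ∈ s, p i) ^ k * (∏ i ∈ s, p i)) =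
        fun k : ℕ => (∏ i ∈ s, p i) ^ (k + 1) := by
      funext k; rw [← pow_succ]
    rw [h2] at h
    exact h.mul_left _
  have hsum : Summable (fun k : ℕ => 1 - ∏ i, (1 - p i ^ (k + 1))) := by
    exact (summable_sum hgeom).congr fun k => (key k).symm
  refine ⟨hsum.abs, ?_⟩
  calc (∑' k : ℕ, (1 - ∏ i, (1 - p i ^ (k + 1))))
      = ∑' k : ℕ, ∑ s ∈ S, (-1 : ℝ) ^ (s.card - 1) * (∏ i ∈ s, p i) ^ (k + 1) := by
        exact tsum_congr key
    _ = ∑ s ∈ S, ∑' k : ℕ, (-1 : ℝ) ^ (s.card - 1) * (∏ i ∈ s, p i) ^ (k + 1) :=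
        Summable.tsum_finsetSum hgeom
    _ = ∑ s ∈ S, (-1 : ℝ) ^ (s.card - 1) * (1 / (1 - ∏ i ∈ s, p i) - 1) := by
        refine Finset.sum_congr rfl fun s hs => ?_
        set r := ∏ i ∈ s, p i with hr
        have h0 := (hps s hs).1
        have h1 := (hps s hs).2
        have hne : (1 : ℝ) - r ≠ 0 := by linarith
        have : ∑' k : ℕ, (-1 : ℝ) ^ (s.card - 1) * r ^ (k + 1) =
            (-1 : ℝ) ^ (s.card - 1) * ∑' k : ℕ, r ^ (k + 1) := by
          rw [tsum_mul_left]
        rw [this]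
        congr 1
        have h2 : (fun k : ℕ => r ^ (k + 1)) = fun k : ℕ => r ^ k * r := by
          funext k; rw [← pow_succ]
        rw [h2, tsum_mul_right, tsum_geometric_of_lt_one h0 h1]
        field_simp
        rw [← hr, mul_div_assoc, div_self hne]
        ring
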